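/- Let ε ∈ {1,−1} and let (a_1,…,a_n) be an n-tuple of strictly positive integers with M_n(a_1,…,a_n) = ε·S and (a_1,…,a_n) ≠ (1,1,2,1,1). Then (a_1,…,a_n) is obtained from a shorter tuple of strictly positive integers that is itself a solution of M = ±S by a single application of operation (a) or operation (b): either there exist an index i with 1 ≤ i ≤ n−2 and strictly positive integers (b_1,…,b_{n−1}) with M_{n−1}(b_1,…,b_{n−1}) = ε·S such that (a_1,…,a_n) = (b_1,…,b_{i−1}, b_i+1, 1, b_{i+1}+1, b_{i+2},…,b_{n−1}); or there exist an index i and strictly positive integers (b_1,…,b_{n−3}) with M_{n−3}(b_1,…,b_{n−3}) = −ε·S and strictly positive integers a′, a″ with a′ + a″ = b_i + 1 such that (a_1,…,a_n) = (b_1,…,b_{i−1}, a′, 1, 1, a″, b_{i+1},…,b_{n−3}). -/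

import Mathlib

/-- The elementary matrix `[[a, -1], [1, 0]]`. -/
def genMat (a : ℤ) : Matrix (Fin 2) (Fin 2) ℤ := !![a, -1; 1, 0]

/-- `Mprod [a₁, …, aₙ] = [[aₙ,-1],[1,0]] ⋯ [[a₁,-1],[1,0]]`. -/
def Mprod (l : List ℤ) : Matrix (Fin 2) (Fin 2) ℤ := ((l.map genMat).reverse).prod

lemma Mprod_nil : Mprod [] = 1 := rfl

lemma Mprod_cons (x : ℤ) (t : List ℤ) : Mprod (x :: t) = Mprod t * genMat x := by
  simp [Mprod, List.prod_append]

lemma Mprod_append (s t : List ℤ) : Mprod (s ++ t) = Mprod t * Mprod s := by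
  simp [Mprod, List.prod_append]

lemma key_a (b c : ℤ) : genMat (c+1) * genMat 1 * genMat (b+1) = genMat c * genMat b := by
  ext i j
  fin_cases i <;> fin_cases j <;>
    simp [genMat, Matrix.mul_apply, Fin.sum_univ_two] <;> ring

lemma key_b (a' a'' : ℤ) :
    genMat a'' * genMat 1 * genMat 1 * genMat a' = -(genMat (a' + a'' - 1)) := by
  ext i j
  fin_cases i <;> fin_cases j <;>
    simp [genMat, Matrix.mul_apply, Fin.sum_univ_two] <;> ring

lemma red_a (u v : List ℤ) (x y : ℤ) :
    Mprod (u ++ x :: 1 :: y :: v) = Mprod (u ++ (x-1) :: (y-1) :: v) := by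
  have h : genMat y * genMat 1 * genMat x = genMat (y-1) * genMat (x-1) := by
    have h2 := key_a (x-1) (y-1)
    rw [sub_add_cancel, sub_add_cancel] at h2
    exact h2
  have h' : genMat y * (genMat 1 * (genMat x * Mprod u)) =
      genMat (y-1) * (genMat (x-1) * Mprod u) := by
    rw [← mul_assoc, ← mul_assoc, h, mul_assoc]
  simp only [Mprod_append, Mprod_cons, mul_assoc, h']

lemma red_b (u v : List ℤ) (a' a'' : ℤ) :
    Mprod (u ++ a' :: 1 :: 1 :: a'' :: v) = -(Mprod (u ++ (a' + a'' - 1) :: v)) := by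
  have h' : genMat a'' * (genMat 1 * (genMat 1 * (genMat a' * Mprod u))) =
      -(genMat (a' + a'' - 1) * Mprod u) := by
    rw [← mul_assoc, ← mul_assoc, ← mul_assoc, key_b, neg_mul]
  simp only [Mprod_append, Mprod_cons, mul_assoc, h', mul_neg]

lemma MR0 : Mprod (List.replicate 0 (1:ℤ)) = 1 := rfl

lemma MR1 : Mprod (List.replicate 1 (1:ℤ)) = !![1,-1;1,0] := by
  show Mprod [1] = _
  rw [Mprod_cons]
  ext i j; fin_cases i <;> fin_cases j <;> simp [genMat, Mprod]

lemma MR2 : Mprod (List.replicate 2 (1:ℤ)) = !![0,-1;1,-1] := by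
  show Mprod [1,1] = _
  rw [Mprod_cons, Mprod_cons]
  ext i j; fin_cases i <;> fin_cases j <;>
    simp [genMat, Mprod, Matrix.mul_apply, Fin.sum_univ_two]

lemma mul_genMat_entries (A : Matrix (Fin 2) (Fin 2) ℤ) (x : ℤ) :
    (A * genMat x) 0 0 = A 0 0 * x + A 0 1 ∧ (A * genMat x) 0 1 = -A 0 0 ∧
    (A * genMat x) 1 0 = A 1 0 * x + A 1 1 ∧ (A * genMat x) 1 1 = -A 1 0 := by
  refine ⟨?_, ?_, ?_, ?_⟩ <;> simp [genMat, Matrix.mul_apply, Fin.sum_univ_two] <;> ring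

lemma inv_lemma (m : List ℤ) (hm : m ≠ []) (h2 : ∀ x ∈ m, 2 ≤ x) :
    (m.length : ℤ) ≤ Mprod m 1 0 ∧ Mprod m 1 0 + 1 ≤ Mprod m 0 0 ∧
    Mprod m 1 1 ≤ 0 ∧ Mprod m 0 1 ≤ Mprod m 1 1 - 1 ∧
    1 ≤ Mprod m 1 0 + Mprod m 1 1 ∧ 1 ≤ Mprod m 0 0 + Mprod m 0 1 ∧
    Mprod m 1 1 - Mprod m 0 1 ≤ Mprod m 0 0 - Mprod m 1 0 := by
  induction m with
  | nil => exact absurd rfl hm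
  | cons x t ih =>
    have hx : 2 ≤ x := h2 x List.mem_cons_self
    rw [Mprod_cons]
    obtain ⟨e1, e2, e3, e4⟩ := mul_genMat_entries (Mprod t) x
    rw [e1, e2, e3, e4]
    rcases t with _ | ⟨y, t'⟩
    · have h1 : Mprod ([] : List ℤ) = 1 := rfl
      simp [h1]
      omega
    · have ht2 : ∀ z ∈ (y :: t'), 2 ≤ z := fun z hz => h2 z (List.mem_cons_of_mem x hz)
      obtain ⟨i1, i2, i3, i4, i5, i6, i7⟩ := ih (by simp) ht2
      have hlen : (1:ℤ) ≤ Mprod (y :: t') 1 0 := by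
        have h0 : 0 < (y::t').length := by simp
        have h0' : (1:ℤ) ≤ ((y::t').length : ℤ) := by exact_mod_cast h0
        omega
      constructor
      · push_cast [List.length_cons] at i1 ⊢
        nlinarith
      refine ⟨by nlinarith, by omega, by omega, by nlinarith, by nlinarith, by nlinarith⟩

lemma structure_lemma (l : List ℤ) (hpos : ∀ x ∈ l, 0 < x) :
    (∃ u x y v, l = u ++ x :: (1:ℤ) :: y :: v ∧ 2 ≤ x ∧ 2 ≤ y) ∨
    (∃ u a' a'' v, l = u ++ a' :: (1:ℤ) :: 1 :: a'' :: v) ∨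
    (∃ p m q, p ≤ 2 ∧ q ≤ 2 ∧ (∀ x ∈ m, (2:ℤ) ≤ x) ∧
      l = List.replicate p (1:ℤ) ++ m ++ List.replicate q 1) := by
  induction l with
  | nil => exact Or.inr (Or.inr ⟨0, [], 0, by norm_num⟩)
  | cons a t ih =>
    have hpt : ∀ x ∈ t, 0 < x := fun x hx => hpos x (List.mem_cons_of_mem a hx)
    have ha : 0 < a := hpos a List.mem_cons_self
    rcases ih hpt with ⟨u, x, y, v, rfl, hx, hy⟩ | ⟨u, a', a'', v, rfl⟩ | ⟨p, m, q, hp, hq, hm, rfl⟩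
    · exact Or.inl ⟨a :: u, x, y, v, rfl, hx, hy⟩
    · exact Or.inr (Or.inl ⟨a :: u, a', a'', v, rfl⟩)
    · rcases eq_or_lt_of_le (show (1:ℤ) ≤ a by omega) with h1 | h2
      · have ha1 : a = 1 := h1.symm
        subst ha1
        interval_cases p
        · exact Or.inr (Or.inr ⟨1, m, q, by norm_num, hq, hm, by simp⟩)
        · exact Or.inr (Or.inr ⟨2, m, q, by norm_num, hq, hm, by simp [List.replicate_succ]⟩)
        · rcases m with _ | ⟨m0, m'⟩
          · interval_cases q
            · exact Or.inr (Or.inr ⟨2, [], 1, by norm_num, by norm_num, by simp,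
                by simp [List.replicate_succ]⟩)
            · exact Or.inr (Or.inl ⟨[], 1, 1, [], by simp [List.replicate_succ]⟩)
            · exact Or.inr (Or.inl ⟨[], 1, 1, [1], by simp [List.replicate_succ]⟩)
          · exact Or.inr (Or.inl ⟨[], 1, m0, m' ++ List.replicate q 1,
              by simp [List.replicate_succ]⟩)
      · have ha2 : (2:ℤ) ≤ a := by omega
        interval_cases p
        · exact Or.inr (Or.inr ⟨0, a :: m, q, by norm_num, hq,
            by intro z hz; rcases List.mem_cons.mp hz with rfl | hz; exact ha2; exact hm z hz,
            by simp⟩)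
        · rcases m with _ | ⟨m0, m'⟩
          · interval_cases q
            · exact Or.inr (Or.inr ⟨0, [a], 1, by norm_num, by norm_num,
                by intro z hz; simp at hz; omega, by simp⟩)
            · exact Or.inr (Or.inr ⟨0, [a], 2, by norm_num, by norm_num,
                by intro z hz; simp at hz; omega, by simp [List.replicate_succ]⟩)
            · exact Or.inr (Or.inl ⟨[], a, 1, [], by simp [List.replicate_succ]⟩)
          · exact Or.inl ⟨[], a, m0, m' ++ List.replicate q 1, by simp, ha2,
              hm m0 List.mem_cons_self⟩
        · rcases m with _ | ⟨m0, m'⟩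
          · interval_cases q
            · exact Or.inr (Or.inr ⟨0, [a], 2, by norm_num, by norm_num,
                by intro z hz; simp at hz; omega, by simp [List.replicate_succ]⟩)
            · exact Or.inr (Or.inl ⟨[], a, 1, List.replicate 0 (1:ℤ),
                by simp [List.replicate_succ]⟩)
            · exact Or.inr (Or.inl ⟨[], a, 1, List.replicate 1 (1:ℤ),
                by simp [List.replicate_succ]⟩)
          · exact Or.inr (Or.inl ⟨[], a, m0, m' ++ List.replicate q 1,
              by simp [List.replicate_succ]⟩)

/-- Every positive solution of `Mₙ = ε·S` other than `(1,1,2,1,1)` is the image,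
under one application of operation (a) or of operation (b), of a shorter positive
solution of `M = ±S`. -/
theorem stmt13 (l : List ℤ) (ε : ℤ) (hε : ε = 1 ∨ ε = -1)
    (hpos : ∀ x ∈ l, 0 < x)
    (hsol : Mprod l = ε • !![0, -1; 1, 0])
    (hne : l ≠ [1, 1, 2, 1, 1]) :
    (∃ (u v : List ℤ) (b c : ℤ), 0 < b ∧ 0 < c ∧
      (∀ x ∈ u, 0 < x) ∧ (∀ x ∈ v, 0 < x) ∧
      Mprod (u ++ b :: c :: v) = ε • !![0, -1; 1, 0] ∧
      l = u ++ (b + 1) :: 1 :: (c + 1) :: v) ∨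
    (∃ (u v : List ℤ) (b a' a'' : ℤ), 0 < b ∧ 0 < a' ∧ 0 < a'' ∧
      (∀ x ∈ u, 0 < x) ∧ (∀ x ∈ v, 0 < x) ∧ a' + a'' = b + 1 ∧
      Mprod (u ++ b :: v) = (-ε) • !![0, -1; 1, 0] ∧
      l = u ++ a' :: 1 :: 1 :: a'' :: v) := by
  rcases structure_lemma l hpos with ⟨u, x, y, v, rfl, hx, hy⟩ | ⟨u, a', a'', v, rfl⟩ |
    ⟨p, m, q, hp, hq, hm, rfl⟩
  · left
    have hu : ∀ z ∈ u, 0 < z := fun z hz => hpos z (by simp [hz])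
    have hv : ∀ z ∈ v, 0 < z := fun z hz => hpos z (by simp [hz])
    refine ⟨u, v, x - 1, y - 1, by omega, by omega, hu, hv, ?_, ?_⟩
    · rw [← red_a]; exact hsol
    · rw [sub_add_cancel, sub_add_cancel]
  · right
    have hu : ∀ z ∈ u, 0 < z := fun z hz => hpos z (by simp [hz])
    have hv : ∀ z ∈ v, 0 < z := fun z hz => hpos z (by simp [hz])
    have ha' : 0 < a' := hpos a' (by simp)
    have ha'' : 0 < a'' := hpos a'' (by simp)
    refine ⟨u, v, a' + a'' - 1, a', a'', by omega, ha', ha'', hu, hv, by ring, ?_, rfl⟩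
    have hb := red_b u v a' a''
    rw [hsol] at hb
    have : Mprod (u ++ (a' + a'' - 1) :: v) = -(ε • !![0, -1; 1, 0]) := by
      rw [hb, neg_neg]
    rw [this, neg_smul]
  · exfalso
    rw [Mprod_append, Mprod_append] at hsol
    interval_cases p <;> interval_cases q <;>
      simp only [MR0, MR1, MR2, one_mul, mul_one] at hsol <;>
    · have h00 := congrFun (congrFun hsol 0) 0
      have h01 := congrFun (congrFun hsol 0) 1
      have h10 := congrFun (congrFun hsol 1) 0
      have h11 := congrFun (congrFun hsol 1) 1
      simp [Matrix.mul_apply, Fin.sum_univ_two, Matrix.smul_apply, smul_eq_mul,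
        Matrix.one_apply] at h00 h01 h10 h11
      rcases m with _ | ⟨x, m'⟩
      · simp [Mprod_nil, Matrix.one_apply] at h00 h01 h10 h11
      · obtain ⟨i1, i2, i3, i4, i5, i6, i7⟩ := inv_lemma (x :: m') (by simp) hm
        rcases hε with rfl | rfl <;>
          first
          | omega
          | (exact hne (by
              have hc : Mprod (x :: m') 1 0 = 1 := by omega
              have hlen : ((x :: m').length : ℤ) ≤ 1 := by omega
              have hm' : m' = [] := by
                rcases m' with _ | ⟨z, t⟩
                · rfl
                · exfalso
                  push_cast [List.length_cons] at hlen
                  omega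
              subst hm'
              have e00 : Mprod [x] 0 0 = x := by simp [Mprod_cons, Mprod_nil, genMat]
              have e01 : Mprod [x] 0 1 = -1 := by simp [Mprod_cons, Mprod_nil, genMat]
              have e10 : Mprod [x] 1 0 = 1 := by simp [Mprod_cons, Mprod_nil, genMat]
              have e11 : Mprod [x] 1 1 = 0 := by simp [Mprod_cons, Mprod_nil, genMat]
              have hx2 : x = 2 := by omega
              rw [hx2]
              rfl))
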